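/- Let G be a finite group and suppose (·,·) is a bilinear form on {e^g : g ∈ G} satisfying the covariance conditions (e^g, e^h) = (e^{gu}, e^{hu}) − (e^{gu}, e^u) − (e^u, e^{hu}) + (e^u, e^u), conjugation invariance, e^e = 0, and the symmetry (e^g, e^h) = (e^h, e^g). Then the form is completely determined by the squared lengths l_C := (e^c, e^c) for conjugacy classes C, via (e^h, e^u) = −(1/2)(l_{[hu⁻¹]} − l_{[h]} − l_{[u]}), where [x] denotes the conjugacy class of x. -/
import Mathlib


/-- A `D^∨(G)`-covariant, symmetric (star-compatible) bimodule inner product on the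
left-invariant forms `e^g` of `ℂG` is determined by its squared lengths:
`(e^h, e^u) = -(1/2)(l_{[hu⁻¹]} - l_{[h]} - l_{[u]})` where `l_{[x]} = (e^x, e^x)`. -/
theorem stmt_8 (G : Type*) [Group G] [Fintype G] (B : G → G → ℂ)
    (hcov : ∀ g h u : G,
      B g h = B (g * u) (h * u) - B (g * u) u - B u (h * u) + B u u)
    (hconj : ∀ g h u : G, B g h = B (u⁻¹ * g * u) (u⁻¹ * h * u))
    (hB1 : ∀ h : G, B 1 h = 0) (hB1' : ∀ g : G, B g 1 = 0)
    (hsymm : ∀ g h : G, B g h = B h g) :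
    ∀ h u : G, B h u = -(1/2) * (B (h * u⁻¹) (h * u⁻¹) - B h h - B u u) := by
  intro h u
  have key := hcov (h * u⁻¹) (h * u⁻¹) u
  rw [inv_mul_cancel_right] at key
  have hs := hsymm u h
  linear_combination ((1/2) : ℂ) * key - (1/2 : ℂ) * hs
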